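/- (Tensorization) Let G=(V,q) be a reversible stochastically complete graph with heat semigroup P_t, and let G̃=(V×V,q̃) be a coupling graph of G with heat semigroup P̃_t. Then for all bounded f:V→ℝ and all t ≥ 0: P̃_t(1⊗f) = 1⊗(P_t f) and P̃_t(f⊗1) = (P_t f)⊗1. -/

import Mathlib

open scoped BigOperators Classical

namespace OllivierGraph

variable {V : Type*}

/-- A graph structure on `V`: non-negative edge weights with finitely many
neighbours for every vertex. -/
def IsGraph (q : V → V → ℝ) : Prop :=
  (∀ x y, 0 ≤ q x y) ∧ ∀ x, {y | 0 < q x y}.Finite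

/-- `m` is an invariant measure for `q`, i.e. `q` is reversible w.r.t. `m`. -/
def IsInvariantMeasure (q : V → V → ℝ) (m : V → ℝ) : Prop :=
  (∀ x, 0 < m x) ∧ ∀ x y, q x y * m x = q y x * m y

/-- Reversibility (undirectedness) of the graph. -/
def IsReversible (q : V → V → ℝ) : Prop :=
  ∃ m : V → ℝ, IsInvariantMeasure q m

/-- The graph Laplacian `Δ f (x) = Σ_y q(x,y)(f(y) - f(x))`. -/
noncomputable def lap (q : V → V → ℝ) (f : V → ℝ) (x : V) : ℝ :=
  ∑' y, q x y * (f y - f x)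

/-- The set of lengths of walks from `x` to `y`. -/
def walkLens (q : V → V → ℝ) (x y : V) : Set ℕ :=
  {n | ∃ p : ℕ → V, p 0 = x ∧ p n = y ∧ ∀ i < n, 0 < q (p i) (p (i + 1))}

/-- The combinatorial distance. -/
noncomputable def gdist (q : V → V → ℝ) (x y : V) : ℕ :=
  sInf (walkLens q x y)

/-- Connectedness: every two vertices are joined by some walk. -/
def GConnected (q : V → V → ℝ) : Prop :=
  ∀ x y : V, (walkLens q x y).Nonempty

/-- `q_min`: the infimum of the positive edge weights. -/
noncomputable def qmin (q : V → V → ℝ) : ℝ :=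
  sInf {c : ℝ | 0 < c ∧ ∃ x y, q x y = c}

/-- Boundedness of a real valued function. -/
def IsBoundedFun (f : V → ℝ) : Prop := ∃ C, ∀ x, |f x| ≤ C

/-- Supremum norm. -/
noncomputable def supNorm (f : V → ℝ) : ℝ := ⨆ x, |f x|

/-- `∇_{xy} f = (f(x) - f(y)) / d(x,y)`. -/
noncomputable def gradxy (q : V → V → ℝ) (f : V → ℝ) (x y : V) : ℝ :=
  (f x - f y) / (gdist q x y : ℝ)

/-- `‖∇ f‖_∞ = sup_{x ≠ y} |∇_{xy} f|`. -/
noncomputable def gradNorm (q : V → V → ℝ) (f : V → ℝ) : ℝ :=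
  ⨆ p : {p : V × V // p.1 ≠ p.2}, |gradxy q f p.1.1 p.1.2|

/-- Ollivier curvature `κ(x,y)`. -/
noncomputable def kappa (q : V → V → ℝ) (x y : V) : ℝ :=
  sInf {c | ∃ f : V → ℝ, gradxy q f y x = 1 ∧ gradNorm q f = 1 ∧
    c = gradxy q (lap q f) x y}

/-- Non-negative Ollivier curvature. -/
def NonnegOllivier (q : V → V → ℝ) : Prop :=
  ∀ x y : V, x ≠ y → 0 ≤ kappa q x y

/-- Transport plan from `x0` to `y0`. -/
def IsTransportPlan (q : V → V → ℝ) (x0 y0 : V) (ρ : V → V → ℝ) : Prop :=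
  (∀ x y, 0 ≤ ρ x y) ∧
  (∀ x, x ≠ x0 → ∑' y, ρ x y = q x0 x) ∧
  (∀ y, y ≠ y0 → ∑' x, ρ x y = q y0 y)

/-- The cost of a transport plan. -/
noncomputable def cost (q : V → V → ℝ) (x0 y0 : V) (ρ : V → V → ℝ) : ℝ :=
  ∑' p : V × V, ρ p.1 p.2 * ((gdist q x0 y0 : ℝ) - (gdist q p.1 p.2 : ℝ))

/-- `μ_ρ(k)`: the mass transported over distance `d(x0,y0) + k`. -/
noncomputable def muRho (q : V → V → ℝ) (x0 y0 : V) (ρ : V → V → ℝ) (k : ℤ) : ℝ :=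
  ∑' p : V × V,
    if (gdist q p.1 p.2 : ℤ) - (gdist q x0 y0 : ℤ) = k then ρ p.1 p.2 else 0

/-- Optimality of a transport plan: it maximizes the cost. -/
def IsOptimalPlan (q : V → V → ℝ) (x0 y0 : V) (ρ : V → V → ℝ) : Prop :=
  IsTransportPlan q x0 y0 ρ ∧
  ∀ σ : V → V → ℝ, IsTransportPlan q x0 y0 σ → cost q x0 y0 σ ≤ cost q x0 y0 ρ

/-- A coupling graph of `q`: a graph on `V × V` whose Laplacian tensorizes. -/
def IsCouplingGraph (q : V → V → ℝ) (qt : V × V → V × V → ℝ) : Prop :=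
  IsGraph qt ∧
  ∀ f : V → ℝ,
    (∀ p : V × V, lap qt (fun r => f r.1) p = lap q f p.1) ∧
    (∀ p : V × V, lap qt (fun r => f r.2) p = lap q f p.2)

/-- A perfect coupling graph. -/
def IsPerfectCoupling (q : V → V → ℝ) (qt : V × V → V × V → ℝ) : Prop :=
  IsCouplingGraph q qt ∧
  ∀ x0 y0 : V,
    IsOptimalPlan q x0 y0 (fun x y => qt (x0, y0) (x, y)) ∧
    (∀ k : ℤ, 1 < |k| → muRho q x0 y0 (fun x y => qt (x0, y0) (x, y)) k = 0) ∧
    (x0 ≠ y0 → 2 * qmin q ≤ muRho q x0 y0 (fun x y => qt (x0, y0) (x, y)) (-1))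

/-- Truncated Laplacian `Δ_S`, corresponding to the rates `q_S(x,y) = q(x,y) 1_S(x)`. -/
noncomputable def lapS (q : V → V → ℝ) (S : Finset V) (f : V → ℝ) (x : V) : ℝ :=
  if x ∈ S then lap q f x else 0

/-- Truncated heat semigroup `P_t^S f = Σ_k t^k Δ_S^k (f · 1_S) / k!`. -/
noncomputable def heatS (q : V → V → ℝ) (S : Finset V) (t : ℝ) (f : V → ℝ) (x : V) : ℝ :=
  ∑' k : ℕ, t ^ k / (Nat.factorial k : ℝ) *
    ((lapS q S)^[k] (fun v => if v ∈ S then f v else 0)) x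

/-- Heat semigroup applied to non-negative functions: supremum of the truncations. -/
noncomputable def heatPos (q : V → V → ℝ) (t : ℝ) (f : V → ℝ) (x : V) : ℝ :=
  ⨆ S : Finset V, heatS q S t f x

/-- Heat semigroup `P_t f := P_t f_+ - P_t f_-`. -/
noncomputable def heat (q : V → V → ℝ) (t : ℝ) (f : V → ℝ) (x : V) : ℝ :=
  heatPos q t (fun v => max (f v) 0) x - heatPos q t (fun v => max (-f v) 0) x

/-- Stochastic completeness: `P_t 1 = 1`. -/
def StochasticallyComplete (q : V → V → ℝ) : Prop :=
  ∀ t : ℝ, 0 ≤ t → ∀ x, heat q t (fun _ => 1) x = 1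

/-- The birth-death chain on `ℕ` with rates `2c` and absorbing state `0`. -/
noncomputable def qBD (c : ℝ) : ℕ → ℕ → ℝ :=
  fun x y => if 0 < x ∧ (x = y + 1 ∨ y = x + 1) then 2 * c else 0

/-- `φ_t(n) = P_t^{ℕ₀} 1_{ℕ₊} (n)`. -/
noncomputable def phiBD (c : ℝ) (t : ℝ) (n : ℕ) : ℝ :=
  heat (qBD c) t (fun k => if 0 < k then 1 else 0) n

/-- `ℓ¹` norm with respect to the measure `m`. -/
noncomputable def l1Norm (m : V → ℝ) (f : V → ℝ) : ℝ := ∑' x, m x * |f x|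

/-- Membership in `ℓ¹(V, m)`. -/
def MemL1 (m : V → ℝ) (f : V → ℝ) : Prop := Summable fun x => m x * |f x|

/-- The `ℓ¹`-Wasserstein distance (via Kantorovich duality). -/
noncomputable def W1 (q : V → V → ℝ) (m : V → ℝ) (μ ν : V → ℝ) : ℝ :=
  sSup {c | ∃ g : V → ℝ, gradNorm q g ≤ 1 ∧ c = ∑' x, m x * (μ x - ν x) * g x}

/-- The Laplacian as a matrix (finite graphs). -/
noncomputable def lapMat [Fintype V] (q : V → V → ℝ) [DecidableEq V] : Matrix V V ℝ :=
  Matrix.of fun x y => q x y - if x = y then ∑ z, q x z else 0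

/-- The heat semigroup `e^{tΔ}` of a finite graph. -/
noncomputable def heatFin [Fintype V] [DecidableEq V] (q : V → V → ℝ) (t : ℝ)
    (f : V → ℝ) : V → ℝ :=
  (NormedSpace.exp (t • lapMat q)).mulVec f

/-- `λ` is an eigenvalue of `-Δ`. -/
def IsLapEigenvalue (q : V → V → ℝ) (lam : ℝ) : Prop :=
  ∃ f : V → ℝ, f ≠ 0 ∧ ∀ x, lap q f x = -lam * f x

/-- Boundary measure `|∂A|` of a set of vertices. -/
noncomputable def boundaryMeasure [Fintype V] [DecidableEq V] (q : V → V → ℝ)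
    (m : V → ℝ) (A : Finset V) : ℝ :=
  ∑ x ∈ A, ∑ y ∈ Aᶜ, m x * q x y

/-- The Cheeger constant of a finite graph. -/
noncomputable def cheeger [Fintype V] [DecidableEq V] (q : V → V → ℝ) (m : V → ℝ) : ℝ :=
  sInf {c | ∃ A : Finset V, 0 < (∑ x ∈ A, m x) ∧ 2 * (∑ x ∈ A, m x) ≤ ∑ x, m x ∧
    c = boundaryMeasure q m A / ∑ x ∈ A, m x}

/-- The diameter of a graph. -/
noncomputable def gdiam (q : V → V → ℝ) : ℝ :=
  ⨆ p : V × V, (gdist q p.1 p.2 : ℝ)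

/-! ### Auxiliary development for the tensorization theorem -/

section AuxTensor

open Filter Topology NormedSpace

variable {W : Type*}

/-- The finset of "neighbours" (positive-rate targets) of `x`. -/
noncomputable def nbr {q : W → W → ℝ} (hg : IsGraph q) (x : W) : Finset W :=
  (hg.2 x).toFinset

lemma q_eq_zero_of_not_mem_nbr {q : W → W → ℝ} (hg : IsGraph q) {x y : W}
    (h : y ∉ nbr hg x) : q x y = 0 := by
  have h1 := hg.1 x y
  simp only [nbr, Set.Finite.mem_toFinset, Set.mem_setOf_eq, not_lt] at h
  linarith

/-- The total rate at `x`. -/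
noncomputable def degq (q : W → W → ℝ) (x : W) : ℝ := ∑' y, q x y

lemma lap_eq_sum {q : W → W → ℝ} (hg : IsGraph q) (g : W → ℝ) (x : W) :
    lap q g x = ∑ y ∈ nbr hg x, q x y * (g y - g x) := by
  refine tsum_eq_sum ?_
  intro y hy
  rw [q_eq_zero_of_not_mem_nbr hg hy, zero_mul]

lemma degq_eq_sum {q : W → W → ℝ} (hg : IsGraph q) (x : W) :
    degq q x = ∑ y ∈ nbr hg x, q x y := by
  refine tsum_eq_sum ?_
  intro y hy
  exact q_eq_zero_of_not_mem_nbr hg hy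

lemma lap_eq_sum' {q : W → W → ℝ} (hg : IsGraph q) (g : W → ℝ) (x : W) :
    lap q g x = (∑ y ∈ nbr hg x, q x y * g y) - degq q x * g x := by
  rw [lap_eq_sum hg, degq_eq_sum hg, Finset.sum_mul, ← Finset.sum_sub_distrib]
  exact Finset.sum_congr rfl fun y _ => by ring

lemma lap_add {q : W → W → ℝ} (hg : IsGraph q) (f g : W → ℝ) (x : W) :
    lap q (fun y => f y + g y) x = lap q f x + lap q g x := by
  simp only [lap_eq_sum hg, ← Finset.sum_add_distrib]
  exact Finset.sum_congr rfl fun y _ => by ring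

lemma lap_smul {q : W → W → ℝ} (hg : IsGraph q) (c : ℝ) (f : W → ℝ) (x : W) :
    lap q (fun y => c * f y) x = c * lap q f x := by
  simp only [lap_eq_sum hg, Finset.mul_sum]
  exact Finset.sum_congr rfl fun y _ => by ring

lemma lap_const {q : W → W → ℝ} (hg : IsGraph q) (c : ℝ) (x : W) :
    lap q (fun _ => c) x = 0 := by
  simp [lap_eq_sum hg]

/-- Extension by zero of a function on a finset. -/
noncomputable def extS (S : Finset W) (v : {x // x ∈ S} → ℝ) : W → ℝ :=
  fun x => if hx : x ∈ S then v ⟨x, hx⟩ else 0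

lemma extS_mem {S : Finset W} (v : {x // x ∈ S} → ℝ) {x : W} (hx : x ∈ S) :
    extS S v x = v ⟨x, hx⟩ := dif_pos hx

lemma extS_not_mem {S : Finset W} (v : {x // x ∈ S} → ℝ) {x : W} (hx : x ∉ S) :
    extS S v x = 0 := dif_neg hx

lemma extS_add {S : Finset W} (v w : {x // x ∈ S} → ℝ) :
    extS S (v + w) = fun x => extS S v x + extS S w x := by
  funext x
  by_cases hx : x ∈ S <;> simp [extS, hx]

lemma extS_smul {S : Finset W} (c : ℝ) (v : {x // x ∈ S} → ℝ) :
    extS S (c • v) = fun x => c * extS S v x := by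
  funext x
  by_cases hx : x ∈ S <;> simp [extS, hx]

/-- The truncated Laplacian as a continuous linear operator on `ℝ^S`. -/
noncomputable def lapL {q : W → W → ℝ} (hg : IsGraph q) (S : Finset W) :
    ({x // x ∈ S} → ℝ) →L[ℝ] ({x // x ∈ S} → ℝ) :=
  LinearMap.toContinuousLinearMap
    { toFun := fun v i => lap q (extS S v) ↑i
      map_add' := by
        intro v w
        funext i
        simp only [extS_add, lap_add hg, Pi.add_apply]
      map_smul' := by
        intro c v
        funext i
        simp only [extS_smul, lap_smul hg, RingHom.id_apply, Pi.smul_apply, smul_eq_mul] }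

lemma lapL_apply {q : W → W → ℝ} (hg : IsGraph q) (S : Finset W)
    (v : {x // x ∈ S} → ℝ) (i : {x // x ∈ S}) :
    lapL hg S v i = lap q (extS S v) ↑i := rfl

lemma lapS_extS {q : W → W → ℝ} (hg : IsGraph q) (S : Finset W) (v : {x // x ∈ S} → ℝ) :
    lapS q S (extS S v) = extS S (lapL hg S v) := by
  funext x
  by_cases hx : x ∈ S
  · rw [lapS, if_pos hx, extS_mem _ hx, lapL_apply]
  · rw [lapS, if_neg hx, extS_not_mem _ hx]

lemma lapS_iter_extS {q : W → W → ℝ} (hg : IsGraph q) (S : Finset W)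
    (v : {x // x ∈ S} → ℝ) (k : ℕ) :
    (lapS q S)^[k] (extS S v) = extS S ((⇑(lapL hg S))^[k] v) := by
  induction k generalizing v with
  | zero => rfl
  | succ k ih =>
      rw [Function.iterate_succ_apply, Function.iterate_succ_apply,
        lapS_extS hg, ih]

lemma indicator_eq_extS (S : Finset W) (f : W → ℝ) :
    (fun v => if v ∈ S then f v else 0) = extS S (fun i => f ↑i) := by
  funext x
  by_cases hx : x ∈ S <;> simp [extS, hx]

lemma clm_pow_apply {E : Type*} [NormedAddCommGroup E] [NormedSpace ℝ E]
    (L : E →L[ℝ] E) (k : ℕ) (v : E) : (L ^ k) v = (⇑L)^[k] v := by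
  induction k with
  | zero => rfl
  | succ k ih =>
      rw [pow_succ', ContinuousLinearMap.mul_apply, Function.iterate_succ_apply', ih]

lemma clm_smul_pow_apply {E : Type*} [NormedAddCommGroup E] [NormedSpace ℝ E]
    (t : ℝ) (L : E →L[ℝ] E) (k : ℕ) (v : E) :
    ((t • L) ^ k) v = t ^ k • (⇑L)^[k] v := by
  induction k with
  | zero => simp
  | succ k ih =>
      rw [pow_succ', ContinuousLinearMap.mul_apply, ih, ContinuousLinearMap.smul_apply,
        ContinuousLinearMap.map_smul, Function.iterate_succ_apply', pow_succ', smul_smul]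

lemma heatS_eq_exp {q : W → W → ℝ} (hg : IsGraph q) (S : Finset W) (t : ℝ) (f : W → ℝ)
    (x : W) :
    heatS q S t f x = extS S (exp (t • lapL hg S) (fun i => f ↑i)) x := by
  classical
  rw [heatS, indicator_eq_extS]
  set L := lapL hg S with hL
  set r : {x // x ∈ S} → ℝ := fun i => f ↑i with hr
  have hit : ∀ k : ℕ, (lapS q S)^[k] (extS S r) = extS S ((⇑L)^[k] r) :=
    fun k => lapS_iter_extS hg S r k
  by_cases hx : x ∈ S
  · have hsum : Summable (fun k : ℕ => ((k.factorial : ℝ))⁻¹ • (t • L) ^ k) :=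
      expSeries_summable' (𝕂 := ℝ) (t • L)
    let Φ : (({x // x ∈ S} → ℝ) →L[ℝ] ({x // x ∈ S} → ℝ)) →L[ℝ] ℝ :=
      (ContinuousLinearMap.proj (⟨x, hx⟩ : {x // x ∈ S})).comp
        (ContinuousLinearMap.apply ℝ ({x // x ∈ S} → ℝ) r)
    have hΦ : ∀ A, Φ A = A r ⟨x, hx⟩ := fun A => rfl
    have hexp : extS S (exp (t • L) r) x = Φ (exp (t • L)) := by
      rw [extS_mem _ hx, hΦ]
    rw [hexp, exp_eq_tsum (𝕂 := ℝ), Φ.map_tsum hsum]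
    refine tsum_congr fun k => ?_
    rw [hit k, extS_mem _ hx, hΦ, ContinuousLinearMap.smul_apply,
      clm_smul_pow_apply]
    simp only [Pi.smul_apply, smul_eq_mul]
    rw [div_eq_mul_inv]
    ring
  · have hz : ∀ k : ℕ, t ^ k / (k.factorial : ℝ) * ((lapS q S)^[k] (extS S r)) x = 0 := by
      intro k
      rw [hit k, extS_not_mem _ hx, mul_zero]
    rw [tsum_congr hz, tsum_zero, extS_not_mem _ hx]

lemma heatS_apply_not_mem {q : W → W → ℝ} (hg : IsGraph q) {S : Finset W} (t : ℝ)
    (f : W → ℝ) {x : W} (hx : x ∉ S) : heatS q S t f x = 0 := by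
  rw [heatS_eq_exp hg, extS_not_mem _ hx]

lemma heatS_zero_time {q : W → W → ℝ} (hg : IsGraph q) (S : Finset W) (f : W → ℝ)
    (x : W) : heatS q S 0 f x = if x ∈ S then f x else 0 := by
  rw [heatS_eq_exp hg, zero_smul, exp_zero, ContinuousLinearMap.one_apply]
  by_cases hx : x ∈ S <;> simp [extS, hx]

lemma heatS_hasDerivAt {q : W → W → ℝ} (hg : IsGraph q) (S : Finset W) (f : W → ℝ)
    (x : W) (t : ℝ) :
    HasDerivAt (fun s => heatS q S s f x)
      (lapS q S (fun y => heatS q S t f y) x) t := by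
  classical
  set L := lapL hg S with hL
  set r : {x // x ∈ S} → ℝ := fun i => f ↑i with hr
  have hfun : ∀ s, (fun y => heatS q S s f y) = extS S (exp (s • L) r) := by
    intro s
    funext y
    exact heatS_eq_exp hg S s f y
  by_cases hx : x ∈ S
  · let Φ : (({x // x ∈ S} → ℝ) →L[ℝ] ({x // x ∈ S} → ℝ)) →L[ℝ] ℝ :=
      (ContinuousLinearMap.proj (⟨x, hx⟩ : {x // x ∈ S})).comp
        (ContinuousLinearMap.apply ℝ ({x // x ∈ S} → ℝ) r)
    have hΦ : ∀ A, Φ A = A r ⟨x, hx⟩ := fun A => rfl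
    have hder : HasDerivAt (fun u : ℝ => exp (u • L)) (L * exp (t • L)) t :=
      hasDerivAt_exp_smul_const' (𝕂 := ℝ) L t
    have hcomp : HasDerivAt (fun s => Φ (exp (s • L))) (Φ (L * exp (t • L))) t :=
      Φ.hasFDerivAt.comp_hasDerivAt t hder
    have heq : (fun s => heatS q S s f x) = fun s => Φ (exp (s • L)) := by
      funext s
      rw [heatS_eq_exp hg, extS_mem _ hx, hΦ]
    have hval : Φ (L * exp (t • L)) = lapS q S (fun y => heatS q S t f y) x := by
      rw [hΦ, ContinuousLinearMap.mul_apply, lapL_apply, lapS, if_pos hx, hfun t]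
    rw [heq, ← hval]
    exact hcomp
  · have heq : (fun s => heatS q S s f x) = fun _ => (0 : ℝ) := by
      funext s
      exact heatS_apply_not_mem hg s f hx
    have hval : lapS q S (fun y => heatS q S t f y) x = 0 := by
      rw [lapS, if_neg hx]
    rw [heq, hval]
    exact hasDerivAt_const t 0

/-- The matrix of the truncated (killed) generator on `S`. -/
noncomputable def Mmat (q : W → W → ℝ) (S : Finset W) :
    {x // x ∈ S} → {x // x ∈ S} → ℝ :=
  fun i j => q ↑i ↑j - if i = j then degq q ↑i else 0

lemma Mmat_offdiag_nonneg (q : W → W → ℝ) (hg : IsGraph q) (S : Finset W)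
    (i j : {x // x ∈ S}) (hij : i ≠ j) : 0 ≤ Mmat q S i j := by
  rw [Mmat, if_neg hij, sub_zero]
  exact hg.1 _ _

lemma Mmat_sum (q : W → W → ℝ) (S : Finset W) (i : {x // x ∈ S}) (ψ : W → ℝ) :
    ∑ j : {x // x ∈ S}, Mmat q S i j * ψ ↑j
      = (∑ j ∈ S, q ↑i j * ψ j) - degq q ↑i * ψ ↑i := by
  have h1 : ∀ j : {x // x ∈ S}, Mmat q S i j * ψ ↑j
      = q ↑i ↑j * ψ ↑j - (if i = j then degq q ↑i * ψ ↑j else 0) := by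
    intro j
    rw [Mmat]
    split <;> ring
  rw [Finset.sum_congr rfl fun j _ => h1 j, Finset.sum_sub_distrib,
    Finset.sum_ite_eq, if_pos (Finset.mem_univ i), ← Finset.sum_coe_sort S
      (fun y => q ↑i y * ψ y)]

lemma sum_S_le_sum_nbr {q : W → W → ℝ} (hg : IsGraph q) {S : Finset W} (x : W)
    (ψ : W → ℝ) (hψ : ∀ y ∉ S, 0 ≤ ψ y) :
    ∑ y ∈ S, q x y * ψ y ≤ ∑ y ∈ nbr hg x, q x y * ψ y := by
  have h1 : ∑ y ∈ S, q x y * ψ y ≤ ∑ y ∈ S ∪ nbr hg x, q x y * ψ y := by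
    refine Finset.sum_le_sum_of_subset_of_nonneg Finset.subset_union_left ?_
    intro y hy hyS
    exact mul_nonneg (hg.1 x y) (hψ y hyS)
  have h2 : ∑ y ∈ nbr hg x, q x y * ψ y = ∑ y ∈ S ∪ nbr hg x, q x y * ψ y := by
    refine Finset.sum_subset Finset.subset_union_right ?_
    intro y _ hy
    rw [q_eq_zero_of_not_mem_nbr hg hy, zero_mul]
  linarith

lemma bridge_le {q : W → W → ℝ} (hg : IsGraph q) {S : Finset W} (i : {x // x ∈ S})
    (ψ : W → ℝ) (hψ : ∀ y ∉ S, 0 ≤ ψ y) :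
    ∑ j : {x // x ∈ S}, Mmat q S i j * ψ ↑j ≤ lap q ψ ↑i := by
  rw [Mmat_sum, lap_eq_sum' hg]
  have := sum_S_le_sum_nbr hg (↑i) ψ hψ
  linarith

lemma bridge_ge {q : W → W → ℝ} (hg : IsGraph q) {S : Finset W} (i : {x // x ∈ S})
    (ψ : W → ℝ) (hψ : ∀ y ∉ S, ψ y ≤ 0) :
    lap q ψ ↑i ≤ ∑ j : {x // x ∈ S}, Mmat q S i j * ψ ↑j := by
  have hneg := bridge_le hg i (fun y => -ψ y) (fun y hy => neg_nonneg.2 (hψ y hy))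
  have hlap : lap q (fun y => -ψ y) ↑i = -lap q ψ ↑i := by
    have := lap_smul hg (-1) ψ ↑i
    simpa [neg_one_mul] using this
  rw [hlap] at hneg
  have hsum : ∑ j : {x // x ∈ S}, Mmat q S i j * (-ψ ↑j)
      = -∑ j : {x // x ∈ S}, Mmat q S i j * ψ ↑j := by
    rw [← Finset.sum_neg_distrib]
    exact Finset.sum_congr rfl fun j _ => by ring
  rw [hsum] at hneg
  linarith

lemma bridge_eq {q : W → W → ℝ} (hg : IsGraph q) {S : Finset W} (i : {x // x ∈ S})
    (ψ : W → ℝ) (hψ : ∀ y ∉ S, ψ y = 0) :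
    lap q ψ ↑i = ∑ j : {x // x ∈ S}, Mmat q S i j * ψ ↑j :=
  le_antisymm (bridge_ge hg i ψ fun y hy => le_of_eq (hψ y hy))
    (bridge_le hg i ψ fun y hy => ge_of_eq (hψ y hy))

lemma Mmat_row_sum_nonpos {q : W → W → ℝ} (hg : IsGraph q) {S : Finset W}
    (i : {x // x ∈ S}) : ∑ j : {x // x ∈ S}, Mmat q S i j ≤ 0 := by
  have h := bridge_le hg i (fun _ => 1) (fun y _ => zero_le_one)
  rw [lap_const hg] at h
  simpa using h

/-- Finite-dimensional parabolic comparison: a (super)solution of a quasimonotone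
linear ODE system which starts nonnegative stays nonnegative. -/
lemma metzler_comparison {ι : Type*} [Fintype ι] (M : ι → ι → ℝ)
    (hM : ∀ i j, i ≠ j → 0 ≤ M i j) (v v' : ℝ → ι → ℝ)
    (hd : ∀ i t, HasDerivAt (fun s => v s i) (v' t i) t)
    (h0 : ∀ i, 0 ≤ v 0 i)
    (hineq : ∀ t, 0 ≤ t → ∀ i, (∑ j, M i j * v t j) ≤ v' t i) :
    ∀ t, 0 ≤ t → ∀ i, 0 ≤ v t i := by
  by_cases hne : Nonempty ι
  swap
  · intro t ht i; exact absurd ⟨i⟩ hne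
  intro t0 ht0 i0
  by_contra hneg
  push_neg at hneg
  set lam : ℝ := 1 + Finset.univ.sup' Finset.univ_nonempty (fun i => ∑ j, M i j)
    with hlam
  have hlamgt : ∀ i, ∑ j, M i j < lam := by
    intro i
    have := Finset.le_sup' (fun i => ∑ j, M i j) (Finset.mem_univ i)
    rw [hlam]
    linarith
  have hexp0 : (0 : ℝ) < Real.exp (lam * t0) := Real.exp_pos _
  set ε : ℝ := -v t0 i0 / (2 * Real.exp (lam * t0)) with hε
  have hεpos : 0 < ε := div_pos (by linarith) (by linarith)
  set w : ℝ → ι → ℝ := fun t i => v t i + ε * Real.exp (lam * t) with hw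
  have hvc : ∀ i, Continuous (fun t => v t i) := by
    intro i
    rw [continuous_iff_continuousAt]
    exact fun t => (hd i t).continuousAt
  have hwc : ∀ i, Continuous (fun t => w t i) := by
    intro i
    exact (hvc i).add (continuous_const.mul
      (Real.continuous_exp.comp (continuous_const.mul continuous_id)))
  set A : Set ℝ := {t | t ∈ Set.Icc 0 t0 ∧ ∃ i, w t i ≤ 0} with hA
  have hwt0 : w t0 i0 < 0 := by
    have : ε * Real.exp (lam * t0) = -v t0 i0 / 2 := by
      rw [hε]
      field_simp
    rw [hw]
    simp only []
    rw [this]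
    linarith
  have hA0 : t0 ∈ A := ⟨⟨ht0, le_refl t0⟩, i0, le_of_lt hwt0⟩
  have hclosed : IsClosed A := by
    have : A = Set.Icc 0 t0 ∩ ⋃ i, (fun t => w t i) ⁻¹' Set.Iic 0 := by
      ext s
      simp [hA, Set.mem_iUnion]
    rw [this]
    exact isClosed_Icc.inter (isClosed_iUnion_of_finite fun i =>
      isClosed_Iic.preimage (hwc i))
  have hbdd : BddBelow A := ⟨0, fun s hs => hs.1.1⟩
  set τ : ℝ := sInf A with hτ
  have hτA : τ ∈ A := hclosed.csInf_mem ⟨t0, hA0⟩ hbdd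
  have hτ0 : 0 ≤ τ := hτA.1.1
  have hτt0 : τ ≤ t0 := hτA.1.2
  have hτpos : 0 < τ := by
    rcases lt_or_eq_of_le hτ0 with h | h
    · exact h
    · exfalso
      obtain ⟨i, hi⟩ := hτA.2
      rw [← h] at hi
      have : 0 < w 0 i := by
        rw [hw]
        simp only []
        rw [mul_zero, Real.exp_zero, mul_one]
        have := h0 i
        linarith
      linarith
  have hbefore : ∀ s, 0 ≤ s → s < τ → ∀ j, 0 < w s j := by
    intro s hs0 hsτ j
    by_contra hc
    push_neg at hc
    have hsA : s ∈ A := ⟨⟨hs0, le_trans (le_of_lt hsτ) hτt0⟩, j, hc⟩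
    have := csInf_le hbdd hsA
    rw [← hτ] at this
    linarith
  have hwτ : ∀ j, 0 ≤ w τ j := by
    intro j
    have htd : Filter.Tendsto (fun s => w s j) (nhdsWithin τ (Set.Iio τ))
        (nhds (w τ j)) := ((hwc j).tendsto τ).mono_left nhdsWithin_le_nhds
    refine ge_of_tendsto htd ?_
    filter_upwards [Ioo_mem_nhdsLT_of_mem (Set.mem_Ioc.2 ⟨hτpos, le_refl τ⟩)]
      with s hs
    exact le_of_lt (hbefore s (le_of_lt hs.1) hs.2 j)
  obtain ⟨i, hi⟩ := hτA.2
  have hwi : w τ i = 0 := le_antisymm hi (hwτ i)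
  -- the derivative of `w · i` at `τ` is positive
  set D : ℝ := v' τ i + ε * (Real.exp (lam * τ) * lam) with hD
  have hφ : HasDerivAt (fun s => w s i) D τ := by
    have h1 : HasDerivAt (fun s : ℝ => lam * s) lam τ := by
      simpa using (hasDerivAt_id τ).const_mul lam
    have h2 : HasDerivAt (fun s : ℝ => Real.exp (lam * s))
        (Real.exp (lam * τ) * lam) τ := h1.exp
    exact (hd i τ).add (h2.const_mul ε)
  have hDpos : 0 < D := by
    have h1 : ∑ j, M i j * v τ j
        = (∑ j, M i j * w τ j) - (∑ j, M i j) * (ε * Real.exp (lam * τ)) := by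
      rw [Finset.sum_mul, ← Finset.sum_sub_distrib]
      refine Finset.sum_congr rfl fun j _ => ?_
      rw [hw]
      ring
    have h2 : 0 ≤ ∑ j, M i j * w τ j := by
      refine Finset.sum_nonneg fun j _ => ?_
      by_cases hji : j = i
      · rw [hji, hwi, mul_zero]
      · exact mul_nonneg (hM i j fun h => hji h.symm) (hwτ j)
    have h3 := hineq τ hτ0 i
    have h4 := hlamgt i
    have h5 : 0 < Real.exp (lam * τ) := Real.exp_pos _
    have h6 : (∑ j, M i j) * (ε * Real.exp (lam * τ))
        < lam * (ε * Real.exp (lam * τ)) := by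
      have := mul_pos hεpos h5
      nlinarith
    rw [hD]
    rw [h1] at h3
    nlinarith
  -- but `w · i` has a minimum over `[0, τ]` at `τ`, so the derivative is `≤ 0`
  have hslope : Filter.Tendsto (slope (fun s => w s i) τ)
      (nhdsWithin τ {τ}ᶜ) (nhds D) := hasDerivAt_iff_tendsto_slope.1 hφ
  have hslope' : Filter.Tendsto (slope (fun s => w s i) τ)
      (nhdsWithin τ (Set.Iio τ)) (nhds D) :=
    hslope.mono_left (nhdsWithin_mono τ (fun s hs => ne_of_lt hs))
  have hDle : D ≤ 0 := by
    refine le_of_tendsto hslope' ?_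
    filter_upwards [Ioo_mem_nhdsLT_of_mem (Set.mem_Ioc.2 ⟨hτpos, le_refl τ⟩)]
      with s hs
    rw [slope_def_field]
    have hnum : 0 ≤ w s i - w τ i := by
      rw [hwi, sub_zero]
      exact le_of_lt (hbefore s (le_of_lt hs.1) hs.2 i)
    have hden : s - τ < 0 := by linarith [hs.2]
    exact div_nonpos_of_nonneg_of_nonpos hnum (le_of_lt hden)
  linarith

lemma heatS_deriv_sum {q : W → W → ℝ} (hg : IsGraph q) {S : Finset W} (f : W → ℝ)
    (t : ℝ) (i : {x // x ∈ S}) :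
    lapS q S (fun y => heatS q S t f y) ↑i
      = ∑ j : {x // x ∈ S}, Mmat q S i j * heatS q S t f ↑j := by
  rw [lapS, if_pos i.2]
  exact bridge_eq hg i _ fun y hy => heatS_apply_not_mem hg t f hy

lemma heatS_nonneg {q : W → W → ℝ} (hg : IsGraph q) {S : Finset W} {f : W → ℝ}
    (hf : ∀ x, 0 ≤ f x) {t : ℝ} (ht : 0 ≤ t) (x : W) : 0 ≤ heatS q S t f x := by
  by_cases hx : x ∈ S
  · refine metzler_comparison (Mmat q S) (fun i j hij => Mmat_offdiag_nonneg q hg S i j hij)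
      (fun s i => heatS q S s f ↑i)
      (fun s i => lapS q S (fun y => heatS q S s f y) ↑i)
      (fun i s => heatS_hasDerivAt hg S f ↑i s) ?_ ?_ t ht ⟨x, hx⟩
    · intro i
      beta_reduce
      rw [heatS_zero_time hg, if_pos i.2]
      exact hf ↑i
    · intro s _ i
      beta_reduce
      rw [heatS_deriv_sum hg]
  · rw [heatS_apply_not_mem hg t f hx]

lemma heatS_le_const {q : W → W → ℝ} (hg : IsGraph q) {S : Finset W} {f : W → ℝ}
    {C : ℝ} (hfC : ∀ x, f x ≤ C) (hC : 0 ≤ C) {t : ℝ} (ht : 0 ≤ t) (x : W) :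
    heatS q S t f x ≤ C := by
  by_cases hx : x ∈ S
  · have key := metzler_comparison (Mmat q S)
      (fun i j hij => Mmat_offdiag_nonneg q hg S i j hij)
      (fun s i => C - heatS q S s f ↑i)
      (fun s i => -(lapS q S (fun y => heatS q S s f y) ↑i))
      (fun i s => (heatS_hasDerivAt hg S f ↑i s).const_sub C) ?_ ?_ t ht ⟨x, hx⟩
    · linarith
    · intro i
      beta_reduce
      rw [heatS_zero_time hg, if_pos i.2]
      have := hfC ↑i
      linarith
    · intro s _ i
      beta_reduce
      rw [heatS_deriv_sum hg]
      have h1 : ∑ j : {x // x ∈ S}, Mmat q S i j * (C - heatS q S s f ↑j)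
          = C * (∑ j : {x // x ∈ S}, Mmat q S i j)
            - ∑ j : {x // x ∈ S}, Mmat q S i j * heatS q S s f ↑j := by
        rw [Finset.mul_sum, ← Finset.sum_sub_distrib]
        exact Finset.sum_congr rfl fun j _ => by ring
      have h2 := Mmat_row_sum_nonpos hg i
      have h3 : C * (∑ j : {x // x ∈ S}, Mmat q S i j) ≤ 0 :=
        mul_nonpos_of_nonneg_of_nonpos hC h2
      rw [h1]
      linarith
  · rw [heatS_apply_not_mem hg t f hx]
    exact hC

lemma heatS_mono_set {q : W → W → ℝ} (hg : IsGraph q) {S T : Finset W} (hST : S ⊆ T)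
    {f : W → ℝ} (hf : ∀ x, 0 ≤ f x) {t : ℝ} (ht : 0 ≤ t) (x : W) :
    heatS q S t f x ≤ heatS q T t f x := by
  by_cases hxT : x ∈ T
  · have key := metzler_comparison (Mmat q T)
      (fun i j hij => Mmat_offdiag_nonneg q hg T i j hij)
      (fun s i => heatS q T s f ↑i - heatS q S s f ↑i)
      (fun s i => lapS q T (fun y => heatS q T s f y) ↑i
        - lapS q S (fun y => heatS q S s f y) ↑i)
      (fun i s => (heatS_hasDerivAt hg T f ↑i s).sub (heatS_hasDerivAt hg S f ↑i s))
      ?_ ?_ t ht ⟨x, hxT⟩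
    · linarith
    · intro i
      beta_reduce
      rw [heatS_zero_time hg, heatS_zero_time hg, if_pos i.2]
      by_cases hiS : ↑i ∈ S
      · rw [if_pos hiS]
        linarith
      · rw [if_neg hiS]
        have := hf (↑i : W)
        linarith
    · intro s hs i
      beta_reduce
      have hsub : ∑ j : {x // x ∈ T}, Mmat q T i j * (heatS q T s f ↑j - heatS q S s f ↑j)
          = (∑ j : {x // x ∈ T}, Mmat q T i j * heatS q T s f ↑j)
            - ∑ j : {x // x ∈ T}, Mmat q T i j * heatS q S s f ↑j := by
        rw [← Finset.sum_sub_distrib]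
        exact Finset.sum_congr rfl fun j _ => by ring
      have hT : lapS q T (fun y => heatS q T s f y) ↑i
          = ∑ j : {x // x ∈ T}, Mmat q T i j * heatS q T s f ↑j :=
        heatS_deriv_sum hg f s i
      have hSle : lapS q S (fun y => heatS q S s f y) ↑i
          ≤ ∑ j : {x // x ∈ T}, Mmat q T i j * heatS q S s f ↑j := by
        by_cases hiS : ↑i ∈ S
        · rw [lapS, if_pos hiS]
          exact le_of_eq (bridge_eq hg i _ fun y hy =>
            heatS_apply_not_mem hg s f fun hyS => hy (hST hyS))
        · rw [lapS, if_neg hiS, Mmat_sum, heatS_apply_not_mem hg s f hiS, mul_zero,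
            sub_zero]
          exact Finset.sum_nonneg fun y _ =>
            mul_nonneg (hg.1 _ _) (heatS_nonneg hg hf hs y)
      rw [hsub, ← hT]
      linarith
  · have hxS : x ∉ S := fun h => hxT (hST h)
    rw [heatS_apply_not_mem hg t f hxS, heatS_apply_not_mem hg t f hxT]

section Coupling

variable {V : Type*} {q : V → V → ℝ} {qt : V × V → V × V → ℝ}

/-- Upper bound: the truncated coupled semigroup applied to `1 ⊗ g` is dominated by
the truncated semigroup of the base graph. -/
lemma heatS_coupling_le (hg : IsGraph q) (hgt : IsGraph qt)
    (h2 : ∀ (f : V → ℝ) (p : V × V), lap qt (fun r => f r.2) p = lap q f p.2)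
    {g : V → ℝ} (hgpos : ∀ x, 0 ≤ g x) {t : ℝ} (ht : 0 ≤ t)
    (St : Finset (V × V)) (p : V × V) :
    heatS qt St t (fun r => g r.2) p ≤ heatS q (St.image Prod.snd) t g p.2 := by
  classical
  set S2 : Finset V := St.image Prod.snd with hS2
  by_cases hp : p ∈ St
  swap
  · rw [heatS_apply_not_mem hgt t _ hp]
    exact heatS_nonneg hg hgpos ht _
  have key := metzler_comparison (Mmat qt St)
    (fun i j hij => Mmat_offdiag_nonneg qt hgt St i j hij)
    (fun s i => heatS q S2 s g (↑i : V × V).2 - heatS qt St s (fun r => g r.2) ↑i)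
    (fun s i => lapS q S2 (fun y => heatS q S2 s g y) (↑i : V × V).2
      - lapS qt St (fun r => heatS qt St s (fun r' => g r'.2) r) ↑i)
    (fun i s => (heatS_hasDerivAt hg S2 g (↑i : V × V).2 s).sub
      (heatS_hasDerivAt hgt St (fun r => g r.2) ↑i s))
    ?_ ?_ t ht ⟨p, hp⟩
  · linarith
  · intro i
    beta_reduce
    have hi2 : (↑i : V × V).2 ∈ S2 := Finset.mem_image_of_mem Prod.snd i.2
    rw [heatS_zero_time hg, heatS_zero_time hgt, if_pos hi2, if_pos i.2]
    simp
  · intro s hs i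
    beta_reduce
    have hi2 : (↑i : V × V).2 ∈ S2 := Finset.mem_image_of_mem Prod.snd i.2
    have hb : lapS q S2 (fun y => heatS q S2 s g y) (↑i : V × V).2
        = lap qt (fun r => heatS q S2 s g r.2) ↑i := by
      rw [lapS, if_pos hi2, h2 (fun y => heatS q S2 s g y) ↑i]
    have hbr : ∑ j : {x // x ∈ St}, Mmat qt St i j * heatS q S2 s g (↑j : V × V).2
        ≤ lap qt (fun r => heatS q S2 s g r.2) ↑i :=
      bridge_le hgt i (fun r => heatS q S2 s g r.2)
        (fun r _ => heatS_nonneg hg hgpos hs r.2)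
    have hh : lapS qt St (fun r => heatS qt St s (fun r' => g r'.2) r) ↑i
        = ∑ j : {x // x ∈ St}, Mmat qt St i j * heatS qt St s (fun r' => g r'.2) ↑j :=
      heatS_deriv_sum hgt (fun r' => g r'.2) s i
    have hsub : ∑ j : {x // x ∈ St}, Mmat qt St i j
          * (heatS q S2 s g (↑j : V × V).2 - heatS qt St s (fun r' => g r'.2) ↑j)
        = (∑ j : {x // x ∈ St}, Mmat qt St i j * heatS q S2 s g (↑j : V × V).2)
          - ∑ j : {x // x ∈ St}, Mmat qt St i j * heatS qt St s (fun r' => g r'.2) ↑j := by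
      rw [← Finset.sum_sub_distrib]
      exact Finset.sum_congr rfl fun j _ => by ring
    rw [hsub, hh, hb]
    linarith

/-- Lower bound: the truncated coupled semigroup on a product box dominates the
truncated base semigroup up to boundary escape terms of the two marginals. -/
lemma heatS_coupling_ge (hg : IsGraph q) (hgt : IsGraph qt)
    (h1 : ∀ (f : V → ℝ) (p : V × V), lap qt (fun r => f r.1) p = lap q f p.1)
    (h2 : ∀ (f : V → ℝ) (p : V × V), lap qt (fun r => f r.2) p = lap q f p.2)
    {g : V → ℝ} {C : ℝ} (hgpos : ∀ x, 0 ≤ g x) (hgC : ∀ x, g x ≤ C) (hC : 0 ≤ C)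
    {t : ℝ} (ht : 0 ≤ t) (S1 S2 : Finset V) {p : V × V}
    (hp1 : p.1 ∈ S1) (hp2 : p.2 ∈ S2) :
    heatS q S2 t g p.2 + C * heatS q S1 t (fun _ => 1) p.1
        + C * heatS q S2 t (fun _ => 1) p.2 - 2 * C
      ≤ heatS qt (S1 ×ˢ S2) t (fun r => g r.2) p := by
  classical
  set St : Finset (V × V) := S1 ×ˢ S2 with hSt
  set φ : ℝ → V × V → ℝ := fun s r =>
    heatS q S2 s g r.2 + C * heatS q S1 s (fun _ => 1) r.1
      + C * heatS q S2 s (fun _ => 1) r.2 - 2 * C with hφ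
  have hφ_le : ∀ s : ℝ, 0 ≤ s → ∀ r : V × V, r ∉ St → φ s r ≤ 0 := by
    intro s hs r hr
    rw [hSt, Finset.mem_product] at hr
    push_neg at hr
    have hb0 : 0 ≤ heatS q S2 s g r.2 := heatS_nonneg hg hgpos hs _
    have hbC : heatS q S2 s g r.2 ≤ C := heatS_le_const hg hgC hC hs _
    have ha10 : 0 ≤ heatS q S1 s (fun _ => (1 : ℝ)) r.1 :=
      heatS_nonneg hg (fun _ => zero_le_one) hs _
    have ha11 : heatS q S1 s (fun _ => (1 : ℝ)) r.1 ≤ 1 :=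
      heatS_le_const hg (fun _ => le_refl (1 : ℝ)) zero_le_one hs _
    have ha20 : 0 ≤ heatS q S2 s (fun _ => (1 : ℝ)) r.2 :=
      heatS_nonneg hg (fun _ => zero_le_one) hs _
    have ha21 : heatS q S2 s (fun _ => (1 : ℝ)) r.2 ≤ 1 :=
      heatS_le_const hg (fun _ => le_refl (1 : ℝ)) zero_le_one hs _
    by_cases hr1 : r.1 ∈ S1
    · have hr2 : r.2 ∉ S2 := hr hr1
      rw [hφ]
      simp only []
      rw [heatS_apply_not_mem hg s g hr2, heatS_apply_not_mem hg s _ hr2]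
      nlinarith
    · rw [hφ]
      simp only []
      rw [heatS_apply_not_mem hg s _ hr1]
      nlinarith
  have key := metzler_comparison (Mmat qt St)
    (fun i j hij => Mmat_offdiag_nonneg qt hgt St i j hij)
    (fun s i => heatS qt St s (fun r => g r.2) ↑i - φ s ↑i)
    (fun s i => lapS qt St (fun r => heatS qt St s (fun r' => g r'.2) r) ↑i
      - (lapS q S2 (fun y => heatS q S2 s g y) (↑i : V × V).2
        + C * lapS q S1 (fun y => heatS q S1 s (fun _ => 1) y) (↑i : V × V).1
        + C * lapS q S2 (fun y => heatS q S2 s (fun _ => 1) y) (↑i : V × V).2))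
    ?_ ?_ ?_ t ht ⟨p, Finset.mem_product.2 ⟨hp1, hp2⟩⟩
  · beta_reduce at key
    rw [hφ] at key
    simp only [] at key
    linarith
  · intro i s
    beta_reduce
    refine (heatS_hasDerivAt hgt St (fun r => g r.2) ↑i s).sub ?_
    have hD : HasDerivAt (fun u => φ u ↑i)
        (lapS q S2 (fun y => heatS q S2 s g y) (↑i : V × V).2
          + C * lapS q S1 (fun y => heatS q S1 s (fun _ => 1) y) (↑i : V × V).1
          + C * lapS q S2 (fun y => heatS q S2 s (fun _ => 1) y) (↑i : V × V).2) s := by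
      have d1 := heatS_hasDerivAt hg S2 g (↑i : V × V).2 s
      have d2 := heatS_hasDerivAt hg S1 (fun _ => (1 : ℝ)) (↑i : V × V).1 s
      have d3 := heatS_hasDerivAt hg S2 (fun _ => (1 : ℝ)) (↑i : V × V).2 s
      exact ((d1.add (d2.const_mul C)).add (d3.const_mul C)).sub_const (2 * C)
    exact hD
  · intro i
    beta_reduce
    have hi1 : (↑i : V × V).1 ∈ S1 := (Finset.mem_product.1 i.2).1
    have hi2 : (↑i : V × V).2 ∈ S2 := (Finset.mem_product.1 i.2).2
    rw [heatS_zero_time hgt, if_pos i.2, hφ]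
    simp only []
    rw [heatS_zero_time hg, heatS_zero_time hg, heatS_zero_time hg, if_pos hi1,
      if_pos hi2, if_pos hi2]
    ring_nf
    simp
  · intro s hs i
    beta_reduce
    have hi1 : (↑i : V × V).1 ∈ S1 := (Finset.mem_product.1 i.2).1
    have hi2 : (↑i : V × V).2 ∈ S2 := (Finset.mem_product.1 i.2).2
    have hh : lapS qt St (fun r => heatS qt St s (fun r' => g r'.2) r) ↑i
        = ∑ j : {x // x ∈ St}, Mmat qt St i j * heatS qt St s (fun r' => g r'.2) ↑j :=
      heatS_deriv_sum hgt (fun r' => g r'.2) s i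
    -- the sum of the three truncated Laplacians equals `lap qt (φ s) i`
    have hDφ : lapS q S2 (fun y => heatS q S2 s g y) (↑i : V × V).2
        + C * lapS q S1 (fun y => heatS q S1 s (fun _ => 1) y) (↑i : V × V).1
        + C * lapS q S2 (fun y => heatS q S2 s (fun _ => 1) y) (↑i : V × V).2
          = lap qt (fun r => φ s r) ↑i := by
      have e1 : (fun r : V × V => φ s r)
          = fun r => heatS q S2 s g r.2
              + (C * heatS q S1 s (fun _ => 1) r.1
                + (C * heatS q S2 s (fun _ => 1) r.2 + -(2 * C))) := by
        funext r
        rw [hφ]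
        ring
      rw [e1, lap_add hgt, lap_add hgt, lap_add hgt,
        lap_smul hgt C (fun y : V × V => heatS q S1 s (fun _ => 1) y.1),
        lap_smul hgt C (fun y : V × V => heatS q S2 s (fun _ => 1) y.2),
        lap_const hgt,
        h2 (fun y => heatS q S2 s g y) ↑i,
        h1 (fun y => heatS q S1 s (fun _ => 1) y) ↑i,
        h2 (fun y => heatS q S2 s (fun _ => 1) y) ↑i,
        lapS, if_pos hi2, lapS, if_pos hi1, lapS, if_pos hi2]
      ring
    have hbr : lap qt (fun r => φ s r) ↑i
        ≤ ∑ j : {x // x ∈ St}, Mmat qt St i j * φ s ↑j :=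
      bridge_ge hgt i (φ s) (fun r hr => hφ_le s hs r hr)
    have hsub : ∑ j : {x // x ∈ St}, Mmat qt St i j
          * (heatS qt St s (fun r' => g r'.2) ↑j - φ s ↑j)
        = (∑ j : {x // x ∈ St}, Mmat qt St i j * heatS qt St s (fun r' => g r'.2) ↑j)
          - ∑ j : {x // x ∈ St}, Mmat qt St i j * φ s ↑j := by
      rw [← Finset.sum_sub_distrib]
      exact Finset.sum_congr rfl fun j _ => by ring
    rw [hsub, hh]
    linarith

end Coupling

lemma heatS_zero_fun {q : W → W → ℝ} (hg : IsGraph q) (S : Finset W) (t : ℝ) (x : W) :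
    heatS q S t (fun _ => (0 : ℝ)) x = 0 := by
  rw [heatS_eq_exp hg]
  have : (fun i : {x // x ∈ S} => (0 : ℝ)) = (0 : {x // x ∈ S} → ℝ) := rfl
  rw [this, ContinuousLinearMap.map_zero]
  by_cases hx : x ∈ S <;> simp [extS, hx]

lemma heatS_le_heatPos {q : W → W → ℝ} (hg : IsGraph q) {f : W → ℝ} {C : ℝ}
    (hfC : ∀ x, f x ≤ C) (hC : 0 ≤ C) {t : ℝ} (ht : 0 ≤ t) (S : Finset W) (x : W) :
    heatS q S t f x ≤ heatPos q t f x := by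
  rw [heatPos]
  refine le_ciSup (f := fun S : Finset W => heatS q S t f x) ⟨C, ?_⟩ S
  rintro c ⟨T, rfl⟩
  exact heatS_le_const hg hfC hC ht x

lemma heatPos_le_const {q : W → W → ℝ} (hg : IsGraph q) {f : W → ℝ} {C : ℝ}
    (hfC : ∀ x, f x ≤ C) (hC : 0 ≤ C) {t : ℝ} (ht : 0 ≤ t) (x : W) :
    heatPos q t f x ≤ C := by
  rw [heatPos]
  exact ciSup_le fun S => heatS_le_const hg hfC hC ht x

lemma tendsto_heatS_heatPos {q : W → W → ℝ} (hg : IsGraph q) {f : W → ℝ} {C : ℝ}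
    (hf : ∀ x, 0 ≤ f x) (hfC : ∀ x, f x ≤ C) (hC : 0 ≤ C) {t : ℝ} (ht : 0 ≤ t)
    (x : W) :
    Filter.Tendsto (fun S : Finset W => heatS q S t f x) Filter.atTop
      (nhds (heatPos q t f x)) := by
  rw [heatPos]
  refine tendsto_atTop_ciSup ?_ ?_
  · exact fun S T hST => heatS_mono_set hg hST hf ht x
  · exact ⟨C, fun c hc => by
      obtain ⟨T, hT⟩ := hc
      rw [← hT]
      exact heatS_le_const hg hfC hC ht x⟩

lemma heatPos_one_of_sc {q : W → W → ℝ} (hg : IsGraph q)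
    (hsc : StochasticallyComplete q) {t : ℝ} (ht : 0 ≤ t) (x : W) :
    heatPos q t (fun _ => (1 : ℝ)) x = 1 := by
  have h := hsc t ht x
  rw [heat] at h
  have e1 : (fun v : W => max ((fun _ => (1 : ℝ)) v) 0) = fun _ => (1 : ℝ) :=
    funext fun v => max_eq_left zero_le_one
  have e2 : (fun v : W => max (-(fun _ => (1 : ℝ)) v) 0) = fun _ => (0 : ℝ) :=
    funext fun v => max_eq_right (by norm_num)
  rw [e1, e2] at h
  have hz : heatPos q t (fun _ => (0 : ℝ)) x = 0 := by
    rw [heatPos]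
    have : (fun S : Finset W => heatS q S t (fun _ => (0 : ℝ)) x)
        = fun _ => (0 : ℝ) := funext fun S => heatS_zero_fun hg S t x
    rw [this, ciSup_const]
  rw [hz] at h
  linarith

lemma ciSup_comp_surjective {α ι ι' : Type*} [SupSet α] {h : ι → ι'}
    (hs : Function.Surjective h) (g : ι' → α) : ⨆ i, g (h i) = ⨆ j, g j := by
  have hr : Set.range (fun i => g (h i)) = Set.range g := by
    ext a
    constructor
    · rintro ⟨i, rfl⟩
      exact ⟨h i, rfl⟩
    · rintro ⟨j, rfl⟩
      obtain ⟨i, rfl⟩ := hs j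
      exact ⟨i, rfl⟩
  rw [iSup, iSup, hr]

section Coupling2

variable {V : Type*} {q : V → V → ℝ} {qt : V × V → V × V → ℝ}

/-- The main identity: the coupled heat semigroup applied to `1 ⊗ g`. -/
lemma heatPos_coupling (hg : IsGraph q) (hgt : IsGraph qt)
    (h1 : ∀ (f : V → ℝ) (p : V × V), lap qt (fun r => f r.1) p = lap q f p.1)
    (h2 : ∀ (f : V → ℝ) (p : V × V), lap qt (fun r => f r.2) p = lap q f p.2)
    (hsc : StochasticallyComplete q)
    {g : V → ℝ} {C : ℝ} (hgpos : ∀ x, 0 ≤ g x) (hgC : ∀ x, g x ≤ C) (hC : 0 ≤ C)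
    {t : ℝ} (ht : 0 ≤ t) (p : V × V) :
    heatPos qt t (fun r => g r.2) p = heatPos q t g p.2 := by
  classical
  refine le_antisymm ?_ ?_
  · rw [heatPos]
    refine ciSup_le fun St => ?_
    refine le_trans (heatS_coupling_le hg hgt h2 hgpos ht St p) ?_
    exact heatS_le_heatPos hg hgC hC ht _ _
  · set F : Finset V × Finset V → ℝ := fun s =>
      heatS q s.2 t g p.2 + C * heatS q s.1 t (fun _ => 1) p.1
        + C * heatS q s.2 t (fun _ => 1) p.2 - 2 * C with hF
    have htfst : Filter.Tendsto (Prod.fst : Finset V × Finset V → Finset V)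
        Filter.atTop Filter.atTop := by
      rw [← Filter.prod_atTop_atTop_eq]
      exact Filter.tendsto_fst
    have htsnd : Filter.Tendsto (Prod.snd : Finset V × Finset V → Finset V)
        Filter.atTop Filter.atTop := by
      rw [← Filter.prod_atTop_atTop_eq]
      exact Filter.tendsto_snd
    have hT1 : Filter.Tendsto (fun s : Finset V × Finset V => heatS q s.2 t g p.2)
        Filter.atTop (nhds (heatPos q t g p.2)) :=
      (tendsto_heatS_heatPos hg hgpos hgC hC ht p.2).comp htsnd
    have hTa1 : Filter.Tendsto
        (fun s : Finset V × Finset V => heatS q s.1 t (fun _ => (1 : ℝ)) p.1)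
        Filter.atTop (nhds 1) := by
      have := (tendsto_heatS_heatPos hg (f := fun _ => (1 : ℝ))
        (fun _ => zero_le_one) (fun _ => le_refl 1) zero_le_one ht p.1).comp htfst
      rwa [heatPos_one_of_sc hg hsc ht] at this
    have hTa2 : Filter.Tendsto
        (fun s : Finset V × Finset V => heatS q s.2 t (fun _ => (1 : ℝ)) p.2)
        Filter.atTop (nhds 1) := by
      have := (tendsto_heatS_heatPos hg (f := fun _ => (1 : ℝ))
        (fun _ => zero_le_one) (fun _ => le_refl 1) zero_le_one ht p.2).comp htsnd
      rwa [heatPos_one_of_sc hg hsc ht] at this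
    have hTF : Filter.Tendsto F Filter.atTop
        (nhds (heatPos q t g p.2 + C * 1 + C * 1 - 2 * C)) :=
      ((hT1.add (hTa1.const_mul C)).add (hTa2.const_mul C)).sub_const (2 * C)
    have hFle : ∀ᶠ s : Finset V × Finset V in Filter.atTop,
        F s ≤ heatPos qt t (fun r => g r.2) p := by
      filter_upwards [Filter.eventually_ge_atTop (({p.1} : Finset V), ({p.2} : Finset V))]
        with s hs
      have hp1 : p.1 ∈ s.1 := Finset.singleton_subset_iff.1 hs.1
      have hp2 : p.2 ∈ s.2 := Finset.singleton_subset_iff.1 hs.2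
      refine le_trans
        (heatS_coupling_ge hg hgt h1 h2 hgpos hgC hC ht s.1 s.2 hp1 hp2) ?_
      exact heatS_le_heatPos hgt (f := fun r => g r.2) (fun r => hgC r.2) hC ht _ p
    have := le_of_tendsto hTF hFle
    linarith

/-- The swapped coupling graph. -/
noncomputable def qswap (qt : V × V → V × V → ℝ) : V × V → V × V → ℝ :=
  fun a b => qt (a.2, a.1) (b.2, b.1)

lemma isGraph_qswap (hgt : IsGraph qt) : IsGraph (qswap qt) := by
  constructor
  · intro x y
    exact hgt.1 _ _
  · intro x
    have : {y : V × V | 0 < qswap qt x y}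
        = Prod.swap ⁻¹' {z : V × V | 0 < qt (x.2, x.1) z} := by
      ext y
      simp [qswap, Prod.swap]
    rw [this]
    exact Set.Finite.preimage (Prod.swap_injective.injOn) (hgt.2 (x.2, x.1))

lemma lap_qswap (g : V × V → ℝ) (p : V × V) :
    lap (qswap qt) g p = lap qt (fun r => g (r.2, r.1)) (p.2, p.1) := by
  have h := Equiv.tsum_eq (Equiv.prodComm V V)
    (fun y : V × V => qt (p.2, p.1) y * (g (y.2, y.1) - g (p.1, p.2)))
  show (∑' y, qswap qt p y * (g y - g p))
      = ∑' y, qt (p.2, p.1) y * (g (y.2, y.1) - g (p.1, p.2))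
  rw [← h]
  refine tsum_congr fun y => ?_
  show qt (p.2, p.1) (y.2, y.1) * (g y - g p)
      = qt (p.2, p.1) (y.2, y.1) * (g ((y.2, y.1).2, (y.2, y.1).1) - g (p.1, p.2))
  simp

lemma lapS_qswap (St : Finset (V × V)) (h : V × V → ℝ) (p : V × V) :
    lapS (qswap qt) St h p
      = lapS qt (St.image Prod.swap) (fun r => h (r.2, r.1)) (p.2, p.1) := by
  have hmem : p ∈ St ↔ (p.2, p.1) ∈ St.image Prod.swap := by
    constructor
    · intro hp
      exact Finset.mem_image.2 ⟨p, hp, rfl⟩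
    · intro hp
      obtain ⟨a, ha, haeq⟩ := Finset.mem_image.1 hp
      have : a = p := by
        have := congrArg Prod.swap haeq
        simpa [Prod.swap] using this
      rwa [← this]
  rw [lapS, lapS]
  by_cases hp : p ∈ St
  · rw [if_pos hp, if_pos (hmem.1 hp), lap_qswap]
  · rw [if_neg hp, if_neg (fun hc => hp (hmem.2 hc))]

lemma heatS_qswap (St : Finset (V × V)) (t : ℝ) (f : V × V → ℝ) (p : V × V) :
    heatS (qswap qt) St t f p
      = heatS qt (St.image Prod.swap) t (fun r => f (r.2, r.1)) (p.2, p.1) := by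
  have hmem : ∀ p : V × V, (p ∈ St ↔ (p.2, p.1) ∈ St.image Prod.swap) := by
    intro p
    constructor
    · intro hp
      exact Finset.mem_image.2 ⟨p, hp, rfl⟩
    · intro hp
      obtain ⟨a, ha, haeq⟩ := Finset.mem_image.1 hp
      have : a = p := by
        have := congrArg Prod.swap haeq
        simpa [Prod.swap] using this
      rwa [← this]
  have hiter : ∀ (h h' : V × V → ℝ), (∀ r, h r = h' (r.2, r.1)) → ∀ (k : ℕ) (r : V × V),
      (lapS (qswap qt) St)^[k] h r
        = (lapS qt (St.image Prod.swap))^[k] h' (r.2, r.1) := by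
    intro h h' hh k
    induction k with
    | zero =>
        intro r
        exact hh r
    | succ k ih =>
        intro r
        rw [Function.iterate_succ_apply', Function.iterate_succ_apply']
        have hfun : (lapS (qswap qt) St)^[k] h
            = fun r' => (lapS qt (St.image Prod.swap))^[k] h' (r'.2, r'.1) :=
          funext fun r' => ih r'
        rw [hfun, lapS_qswap]
  rw [heatS, heatS]
  refine tsum_congr fun k => ?_
  congr 1
  refine hiter _ _ ?_ k p
  intro r
  by_cases hr : r ∈ St
  · exact (if_pos hr).trans (if_pos ((hmem r).1 hr)).symm
  · exact (if_neg hr).trans (if_neg (fun hc => hr ((hmem r).2 hc))).symm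

lemma heatPos_qswap (t : ℝ) (f : V × V → ℝ) (p : V × V) :
    heatPos (qswap qt) t f p
      = heatPos qt t (fun r => f (r.2, r.1)) (p.2, p.1) := by
  rw [heatPos, heatPos]
  have hsurj : Function.Surjective
      (fun St : Finset (V × V) => St.image Prod.swap) := by
    intro T
    refine ⟨T.image Prod.swap, ?_⟩
    show (T.image Prod.swap).image Prod.swap = T
    rw [Finset.image_image]
    have : (Prod.swap ∘ Prod.swap : V × V → V × V) = id := funext fun r => Prod.swap_swap r
    rw [this, Finset.image_id]
  have := ciSup_comp_surjective hsurj
    (fun T => heatS qt T t (fun r => f (r.2, r.1)) (p.2, p.1))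
  rw [← this]
  exact iSup_congr fun St => heatS_qswap St t f p

end Coupling2

end AuxTensor

theorem heat_tensorization
    {V : Type*} [Countable V] (q : V → V → ℝ) (qt : V × V → V × V → ℝ)
    (hg : IsGraph q) (hrev : IsReversible q) (hsc : StochasticallyComplete q)
    (hcpl : IsCouplingGraph q qt)
    (f : V → ℝ) (hf : IsBoundedFun f) (t : ℝ) (ht : 0 ≤ t) :
    (∀ p : V × V, heat qt t (fun r => f r.2) p = heat q t f p.2) ∧
      ∀ p : V × V, heat qt t (fun r => f r.1) p = heat q t f p.1 := by
  obtain ⟨Cb, hCb⟩ := hf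
  have hgt : IsGraph qt := hcpl.1
  have h1 : ∀ (f : V → ℝ) (p : V × V), lap qt (fun r => f r.1) p = lap q f p.1 :=
    fun f => (hcpl.2 f).1
  have h2 : ∀ (f : V → ℝ) (p : V × V), lap qt (fun r => f r.2) p = lap q f p.2 :=
    fun f => (hcpl.2 f).2
  have hgs : IsGraph (qswap qt) := isGraph_qswap hgt
  have h1s : ∀ (f : V → ℝ) (p : V × V),
      lap (qswap qt) (fun r => f r.1) p = lap q f p.1 :=
    fun f p => (lap_qswap (fun r => f r.1) p).trans (h2 f (p.2, p.1))
  have h2s : ∀ (f : V → ℝ) (p : V × V),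
      lap (qswap qt) (fun r => f r.2) p = lap q f p.2 :=
    fun f p => (lap_qswap (fun r => f r.2) p).trans (h1 f (p.2, p.1))
  constructor
  · intro p
    have hC0 : (0 : ℝ) ≤ Cb := le_trans (abs_nonneg _) (hCb p.2)
    have e1 := heatPos_coupling hg hgt h1 h2 hsc (g := fun x => max (f x) 0)
      (fun x => le_max_right _ _)
      (fun x => max_le (le_trans (le_abs_self _) (hCb x)) hC0) hC0 ht p
    have e2 := heatPos_coupling hg hgt h1 h2 hsc (g := fun x => max (-f x) 0)
      (fun x => le_max_right _ _)
      (fun x => max_le (le_trans (neg_le_abs _) (hCb x)) hC0) hC0 ht p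
    exact congrArg₂ (fun a b : ℝ => a - b) e1 e2
  · intro p
    have hC0 : (0 : ℝ) ≤ Cb := le_trans (abs_nonneg _) (hCb p.1)
    have main1 : ∀ g : V → ℝ, (∀ x, 0 ≤ g x) → (∀ x, g x ≤ Cb) →
        heatPos qt t (fun r => g r.1) p = heatPos q t g p.1 := by
      intro g hg0 hgC
      have e := heatPos_coupling hg hgs h1s h2s hsc hg0 hgC hC0 ht (p.2, p.1)
      have hsw := heatPos_qswap (qt := qt) t (fun r : V × V => g r.2) (p.2, p.1)
      exact hsw.symm.trans e
    have e1 := main1 (fun x => max (f x) 0) (fun x => le_max_right _ _)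
      (fun x => max_le (le_trans (le_abs_self _) (hCb x)) hC0)
    have e2 := main1 (fun x => max (-f x) 0) (fun x => le_max_right _ _)
      (fun x => max_le (le_trans (neg_le_abs _) (hCb x)) hC0)
    exact congrArg₂ (fun a b : ℝ => a - b) e1 e2

end OllivierGraph
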